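/- (Fast time-scale voltage feasibility.) Let Ξ be convex, let the fast time-scale disturbance process satisfy quasi-stationarity, and let v̲², v̄² ∈ ℝ^n. Suppose that for every ξ = (1, ξ(0), …, ξ(T−1)) ∈ Ξ and every t = 0,…,T−1, v̲² ≤ V_u·u(t;ξ) + V_ξ·ξ(t) + v₀²·𝟏 ≤ v̄² componentwise. Then for every t = 0,…,T−1 and every k = 0,…,K−1, v̲² ≤ V_u·u(k,t) + V_ξ·ξ(k,t) + v₀²·𝟏 ≤ v̄² componentwise. -/

import Mathlib

/-- Slow time-scale average `ξ̄(t) = (1/K)·Σ_{ℓ=0}^{K−1} ξ(ℓ,t)` of a fast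
time-scale disturbance process `ξ(k,t)`. -/
noncomputable def slowAvg {ι : Type*} (K : ℕ) (ξ : ℕ → ℕ → ι → ℝ) (t : ℕ) :
    ι → ℝ :=
  (K : ℝ)⁻¹ • ∑ ℓ ∈ Finset.range K, ξ ℓ t

/-- Slow time-scale affine input `u(t;ξ) = ū(t) + Σ_{s=0}^{t} Q(t,s) ξ(s)`.
Inputs live in `ℝ^{2n} ≃ (Fin n × Fin 2 → ℝ)` and disturbance blocks in
`ℝ^{3n} ≃ (Fin n × Fin 3 → ℝ)`. -/
def uslow {n : ℕ} (ubar : ℕ → Fin n × Fin 2 → ℝ)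
    (Q : ℕ → ℕ → Matrix (Fin n × Fin 2) (Fin n × Fin 3) ℝ)
    (ζ : ℕ → Fin n × Fin 3 → ℝ) (t : ℕ) : Fin n × Fin 2 → ℝ :=
  ubar t + ∑ s ∈ Finset.range (t + 1), (Q t s).mulVec (ζ s)

/-- Fast time-scale input
`u(k,t) = ū(t) + Q(t,t) ξ(k,t) + Σ_{s=0}^{t−1} Q(t,s) ξ̄(s)`. -/
noncomputable def ufast {n : ℕ} (K : ℕ) (ubar : ℕ → Fin n × Fin 2 → ℝ)
    (Q : ℕ → ℕ → Matrix (Fin n × Fin 2) (Fin n × Fin 3) ℝ)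
    (ξ : ℕ → ℕ → Fin n × Fin 3 → ℝ) (k t : ℕ) : Fin n × Fin 2 → ℝ :=
  ubar t + (Q t t).mulVec (ξ k t)
    + ∑ s ∈ Finset.range t, (Q t s).mulVec (slowAvg K ξ s)

/-- `V_u = R ⊗ [1, 0] + X ⊗ [0, 1] ∈ ℝ^{n×2n}` (Kronecker product written
entrywise over the index identification `ℝ^{2n} ≃ (Fin n × Fin 2 → ℝ)`). -/
def Vu (n : ℕ) (R X : Matrix (Fin n) (Fin n) ℝ) :
    Matrix (Fin n) (Fin n × Fin 2) ℝ :=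
  Matrix.of fun i p => R i p.1 * ![(1 : ℝ), 0] p.2 + X i p.1 * ![(0 : ℝ), 1] p.2

/-- `V_ξ = R ⊗ [−1, 0, 1] − X ⊗ [0, 1, 0] ∈ ℝ^{n×3n}` (Kronecker product
written entrywise over `ℝ^{3n} ≃ (Fin n × Fin 3 → ℝ)`). -/
def Vxi (n : ℕ) (R X : Matrix (Fin n) (Fin n) ℝ) :
    Matrix (Fin n) (Fin n × Fin 3) ℝ :=
  Matrix.of fun i p =>
    R i p.1 * ![(-1 : ℝ), 0, 1] p.2 - X i p.1 * ![(0 : ℝ), 1, 0] p.2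

lemma sum_fun_apply' {M : Type*} [AddCommMonoid M] {t K : ℕ} (a : Fin t) (g : Fin K → M) :
    ∑ f : Fin t → Fin K, g (f a) = (K ^ (t - 1)) • ∑ ℓ : Fin K, g ℓ := by
  classical
  have h1 : ∑ f : Fin t → Fin K, g (f a)
      = ∑ p : Fin K × ({ j : Fin t // j ≠ a } → Fin K), g p.1 := by
    rw [← Equiv.sum_comp (Equiv.funSplitAt a (Fin K)).symm (fun h => g (h a))]
    refine Finset.sum_congr rfl fun p _ => ?_
    simp [Equiv.funSplitAt, Equiv.piSplitAt]
  rw [h1, Fintype.sum_prod_type]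
  simp only [Finset.sum_const, Finset.card_univ]
  rw [← Finset.smul_sum]
  congr 1
  rw [Fintype.card_fun]
  congr 1
  · simp
  · rw [Fintype.card_subtype_compl]
    simp [Fintype.card_subtype_eq]

lemma cast_pow_pred {t K : ℕ} (hK : 0 < K) (ht : 0 < t) :
    ((K ^ (t - 1) : ℕ) : ℝ) = (K : ℝ) ^ t * (K : ℝ)⁻¹ := by
  have hKne : (K : ℝ) ≠ 0 := Nat.cast_ne_zero.mpr hK.ne'
  obtain ⟨m, rfl⟩ := Nat.exists_eq_add_of_lt ht
  push_cast
  rw [pow_succ, mul_assoc, mul_inv_cancel₀ hKne, mul_one]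

/-- fast time-scale voltage feasibility: if the affine policy
robustly satisfies the voltage constraints
`v̲² ≤ V_u·u(t;ξ) + V_ξ·ξ(t) + v₀²·𝟏 ≤ v̄²` for every slow time-scale
trajectory in `Ξ`, then the same bounds hold for the fast time-scale inputs
and disturbances. -/
theorem statement_6 (n T K : ℕ) (hn : 0 < n) (hT : 0 < T) (hK : 0 < K)
    (Ξ : Set (ℝ × (Fin T → Fin n × Fin 3 → ℝ))) (hconv : Convex ℝ Ξ)
    (ξ : ℕ → ℕ → Fin n × Fin 3 → ℝ)
    (hquasi : ∀ f : ℕ → ℕ, (∀ t, f t < K) →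
      ((1 : ℝ), fun t : Fin T => ξ (f t) t) ∈ Ξ)
    (ubar : ℕ → Fin n × Fin 2 → ℝ)
    (Q : ℕ → ℕ → Matrix (Fin n × Fin 2) (Fin n × Fin 3) ℝ)
    (R X : Matrix (Fin n) (Fin n) ℝ) (v0 : ℝ)
    (vlo2 vhi2 : Fin n → ℝ)
    (hslow : ∀ ζ : ℕ → Fin n × Fin 3 → ℝ,
      ((1 : ℝ), fun s : Fin T => ζ s) ∈ Ξ → ∀ t < T, ∀ i,
        vlo2 i ≤ (Vu n R X).mulVec (uslow ubar Q ζ t) i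
            + (Vxi n R X).mulVec (ζ t) i + v0 ^ 2 ∧
        (Vu n R X).mulVec (uslow ubar Q ζ t) i
            + (Vxi n R X).mulVec (ζ t) i + v0 ^ 2 ≤ vhi2 i) :
    ∀ t < T, ∀ k < K, ∀ i,
      vlo2 i ≤ (Vu n R X).mulVec (ufast K ubar Q ξ k t) i
          + (Vxi n R X).mulVec (ξ k t) i + v0 ^ 2 ∧
      (Vu n R X).mulVec (ufast K ubar Q ξ k t) i
          + (Vxi n R X).mulVec (ξ k t) i + v0 ^ 2 ≤ vhi2 i := by
  classical
  intro t ht k hk i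
  have hKne : (K : ℝ) ≠ 0 := Nat.cast_ne_zero.mpr hK.ne'
  set fnat : (Fin t → Fin K) → ℕ → ℕ :=
    fun f s => if h : s < t then (f ⟨s, h⟩ : ℕ) else if s = t then k else 0 with hfnat
  have hflt : ∀ f s, fnat f s < K := by
    intro f s
    simp only [hfnat]
    split_ifs with h1 h2
    · exact (f ⟨s, h1⟩).isLt
    · exact hk
    · exact hK
  have hft : ∀ f, fnat f t = k := by
    intro f; simp [hfnat]
  have hfs : ∀ (f : Fin t → Fin K) (s : ℕ) (hs : s < t), fnat f s = (f ⟨s, hs⟩ : ℕ) := by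
    intro f s hs; simp [hfnat, hs]
  have hb : ∀ f : Fin t → Fin K,
      vlo2 i ≤ (Vu n R X).mulVec (uslow ubar Q (fun s => ξ (fnat f s) s) t) i
          + (Vxi n R X).mulVec (ξ k t) i + v0 ^ 2 ∧
      (Vu n R X).mulVec (uslow ubar Q (fun s => ξ (fnat f s) s) t) i
          + (Vxi n R X).mulVec (ξ k t) i + v0 ^ 2 ≤ vhi2 i := by
    intro f
    have := hslow (fun s => ξ (fnat f s) s) (hquasi (fnat f) (hflt f)) t ht i
    rwa [hft f] at this
  have husum : ∑ f : Fin t → Fin K, uslow ubar Q (fun s => ξ (fnat f s) s) t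
      = ((K : ℝ) ^ t) • ufast K ubar Q ξ k t := by
    have hterm : ∀ f : Fin t → Fin K,
        uslow ubar Q (fun s => ξ (fnat f s) s) t
          = (ubar t + (Q t t).mulVec (ξ k t))
            + ∑ s ∈ Finset.range t, (Q t s).mulVec (ξ (fnat f s) s) := by
      intro f
      simp only [uslow, Finset.sum_range_succ, hft f]
      abel
    simp only [hterm]
    rw [Finset.sum_add_distrib, Finset.sum_const, Finset.card_univ, Fintype.card_fun,
      Fintype.card_fin, Fintype.card_fin, Finset.sum_comm]
    have hinner : ∀ s ∈ Finset.range t,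
        ∑ f : Fin t → Fin K, (Q t s).mulVec (ξ (fnat f s) s)
          = ((K : ℝ) ^ t) • (Q t s).mulVec (slowAvg K ξ s) := by
      intro s hs
      have hs' : s < t := Finset.mem_range.mp hs
      have h1 : ∑ f : Fin t → Fin K, ξ (fnat f s) s
          = (K ^ (t - 1) : ℕ) • ∑ ℓ : Fin K, ξ (ℓ : ℕ) s := by
        have h := sum_fun_apply' (⟨s, hs'⟩ : Fin t) (fun ℓ : Fin K => ξ (ℓ : ℕ) s)
        rw [← h]
        refine Finset.sum_congr rfl fun f _ => ?_
        rw [hfs f s hs']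
      calc ∑ f : Fin t → Fin K, (Q t s).mulVec (ξ (fnat f s) s)
          = (Q t s).mulVec (∑ f : Fin t → Fin K, ξ (fnat f s) s) := by
            rw [← Matrix.mulVecLin_apply, map_sum]
            simp [Matrix.mulVecLin_apply]
        _ = (Q t s).mulVec ((K ^ (t - 1) : ℕ) • ∑ ℓ : Fin K, ξ (ℓ : ℕ) s) := by rw [h1]
        _ = ((K : ℝ) ^ t) • (Q t s).mulVec (slowAvg K ξ s) := by
            have hsl : (Q t s).mulVec (slowAvg K ξ s)
                = (K : ℝ)⁻¹ • (Q t s).mulVec (∑ ℓ ∈ Finset.range K, ξ ℓ s) := by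
              rw [slowAvg, ← Matrix.mulVecLin_apply, map_smul, Matrix.mulVecLin_apply]
            rw [← Nat.cast_smul_eq_nsmul ℝ,
              cast_pow_pred hK (lt_of_le_of_lt (Nat.zero_le s) hs'), hsl, smul_smul,
              Fin.sum_univ_eq_sum_range (fun ℓ => ξ ℓ s) K, ← Matrix.mulVecLin_apply,
              map_smul, Matrix.mulVecLin_apply]
    rw [Finset.sum_congr rfl hinner]
    simp only [ufast, smul_add, Finset.smul_sum]
    rw [← Nat.cast_smul_eq_nsmul ℝ]
    push_cast
    module
  set G : ℝ := (Vu n R X).mulVec (ufast K ubar Q ξ k t) i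
      + (Vxi n R X).mulVec (ξ k t) i + v0 ^ 2 with hG
  have hscal : ∑ f : Fin t → Fin K,
      ((Vu n R X).mulVec (uslow ubar Q (fun s => ξ (fnat f s) s) t) i
        + (Vxi n R X).mulVec (ξ k t) i + v0 ^ 2) = (K : ℝ) ^ t * G := by
    have h2 : ∑ f : Fin t → Fin K,
        (Vu n R X).mulVec (uslow ubar Q (fun s => ξ (fnat f s) s) t) i
        = (K : ℝ) ^ t * (Vu n R X).mulVec (ufast K ubar Q ξ k t) i := by
      calc ∑ f : Fin t → Fin K,
            (Vu n R X).mulVec (uslow ubar Q (fun s => ξ (fnat f s) s) t) i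
          = ((Vu n R X).mulVec (∑ f : Fin t → Fin K,
              uslow ubar Q (fun s => ξ (fnat f s) s) t)) i := by
            rw [← Matrix.mulVecLin_apply, map_sum]
            simp [Matrix.mulVecLin_apply, Finset.sum_apply]
        _ = (K : ℝ) ^ t * (Vu n R X).mulVec (ufast K ubar Q ξ k t) i := by
            rw [husum, ← Matrix.mulVecLin_apply, map_smul]
            simp [Matrix.mulVecLin_apply]
    rw [Finset.sum_add_distrib, Finset.sum_add_distrib, h2, Finset.sum_const,
      Finset.sum_const, Finset.card_univ, Fintype.card_fun, Fintype.card_fin,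
      Fintype.card_fin, nsmul_eq_mul, nsmul_eq_mul, Nat.cast_pow]
    ring
  have hN : (0 : ℝ) < (K : ℝ) ^ t := pow_pos (by exact_mod_cast hK) t
  constructor
  · have hle : ∑ _f : Fin t → Fin K, vlo2 i ≤ (K : ℝ) ^ t * G := by
      rw [← hscal]
      exact Finset.sum_le_sum fun f _ => (hb f).1
    rw [Finset.sum_const, Finset.card_univ, Fintype.card_fun, Fintype.card_fin,
      Fintype.card_fin, nsmul_eq_mul, Nat.cast_pow] at hle
    exact le_of_mul_le_mul_left hle hN
  · have hle : (K : ℝ) ^ t * G ≤ ∑ _f : Fin t → Fin K, vhi2 i := by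
      rw [← hscal]
      exact Finset.sum_le_sum fun f _ => (hb f).2
    rw [Finset.sum_const, Finset.card_univ, Fintype.card_fun, Fintype.card_fin,
      Fintype.card_fin, nsmul_eq_mul, Nat.cast_pow] at hle
    exact le_of_mul_le_mul_left hle hN
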